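/- arXiv:2410.00317 — 2 statements merged into one kernel-verified Lean document; each statement's English description precedes it below -/
import Mathlib

section
/- Suppose G₁ = (V₁, E₁) is a graph whose rigidity matrix R(G₁,p) has rank d|V₁| − binom(d+1,2), and G₂ is a pinned graph with inner vertices I₂, pinned vertex set P₂ ⊆ V₁ with |P₂| ≥ d, edge set E₂ disjoint from E₁, and pinned rigidity matrix R̃(G₂,p) of full rank d|I₂|. Then the rigidity matrix of G = G₁ ∪ G₂ has rank exactly d·|V(G)| − binom(d+1,2), i.e., G is infinitesimally rigid in R^d. -/
/-- The rigidity matrix of a framework in `ℝ^d`. -/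
def rigidityMatrix {V E : Type*} [DecidableEq V] (d : ℕ)
    (ep : E → V × V) (p : V → Fin d → ℝ) : Matrix E (V × Fin d) ℝ :=
  fun e vk =>
    if vk.1 = (ep e).1 then p (ep e).1 vk.2 - p (ep e).2 vk.2
    else if vk.1 = (ep e).2 then p (ep e).2 vk.2 - p (ep e).1 vk.2
    else 0

/-- The pinned rigidity matrix: columns only for inner vertices (those in `I`). -/
def pinnedRigidityMatrix {V E : Type*} [DecidableEq V] (d : ℕ) (I : Finset V)
    (ep : E → V × V) (p : V → Fin d → ℝ) : Matrix E ({v // v ∈ I} × Fin d) ℝ :=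
  fun e vk =>
    if (vk.1 : V) = (ep e).1 then p (ep e).1 vk.2 - p (ep e).2 vk.2
    else if (vk.1 : V) = (ep e).2 then p (ep e).2 vk.2 - p (ep e).1 vk.2
    else 0

set_option maxHeartbeats 1000000
set_option synthInstance.maxHeartbeats 400000

open Finset

lemma two_mul_choose_two (d : ℕ) : 2 * ((d + 1).choose 2) = d * (d + 1) := by
  rw [Nat.choose_two_right]
  simp only [Nat.add_sub_cancel]
  rw [mul_comm (d + 1) d]
  exact Nat.mul_div_cancel' (Nat.even_mul_succ_self d).two_dvd

lemma rigidity_row_dot {V E : Type*} [Fintype V] [DecidableEq V] (d : ℕ)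
    (ep : E → V × V) (p : V → Fin d → ℝ) (e : E) (x : V × Fin d → ℝ) :
    (rigidityMatrix d ep p).mulVec x e
      = ∑ k, (p (ep e).1 k - p (ep e).2 k) * (x ((ep e).1, k) - x ((ep e).2, k)) := by
  classical
  rcases hep : ep e with ⟨u, w⟩
  have hM : ∀ vk : V × Fin d, rigidityMatrix d ep p e vk
      = if vk.1 = u then p u vk.2 - p w vk.2
        else if vk.1 = w then p w vk.2 - p u vk.2 else 0 := by
    intro vk; rw [rigidityMatrix, hep]
  have hmv : (rigidityMatrix d ep p).mulVec x e
      = ∑ v : V, ∑ k : Fin d, (rigidityMatrix d ep p) e (v, k) * x (v, k) := by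
    rw [Matrix.mulVec, dotProduct, Fintype.sum_prod_type]
  rw [hmv]
  have hpt : ∀ v : V, (∑ k : Fin d, (rigidityMatrix d ep p) e (v, k) * x (v, k))
      = (if v = u then ∑ k, (p u k - p w k) * x (v, k) else 0)
        + (if v = w then ∑ k, (p w k - p u k) * x (v, k) else 0) := by
    intro v
    by_cases h1 : v = u
    · subst h1
      by_cases h2 : v = w
      · subst h2; simp [hM]
      · simp [hM, h2]
    · by_cases h2 : v = w
      · subst h2; simp [hM, h1]
      · simp [hM, h1, h2]
  rw [Finset.sum_congr rfl (fun v _ => hpt v), Finset.sum_add_distrib,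
    Finset.sum_ite_eq' univ u, Finset.sum_ite_eq' univ w]
  simp only [mem_univ, if_true]
  rw [← Finset.sum_add_distrib]
  apply Finset.sum_congr rfl
  intro k _
  ring

lemma pinned_row_dot {V E : Type*} [Fintype V] [DecidableEq V] (d : ℕ) (I : Finset V)
    (ep : E → V × V) (p : V → Fin d → ℝ) (e : E) (x : V × Fin d → ℝ) :
    (pinnedRigidityMatrix d I ep p).mulVec (fun ik => x ((ik.1 : V), ik.2)) e
      = ∑ k, (p (ep e).1 k - p (ep e).2 k) *
          ((if (ep e).1 ∈ I then x ((ep e).1, k) else 0)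
            - (if (ep e).2 ∈ I then x ((ep e).2, k) else 0)) := by
  classical
  rcases hep : ep e with ⟨u, w⟩
  have hM : ∀ ik : {v // v ∈ I} × Fin d, pinnedRigidityMatrix d I ep p e ik
      = if (ik.1 : V) = u then p u ik.2 - p w ik.2
        else if (ik.1 : V) = w then p w ik.2 - p u ik.2 else 0 := by
    intro ik; rw [pinnedRigidityMatrix, hep]
  have hmv : (pinnedRigidityMatrix d I ep p).mulVec (fun ik => x ((ik.1 : V), ik.2)) e
      = ∑ i : {v // v ∈ I}, ∑ k : Fin d,
          (pinnedRigidityMatrix d I ep p) e (i, k) * x ((i : V), k) := by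
    rw [Matrix.mulVec, dotProduct, Fintype.sum_prod_type]
  rw [hmv]
  have hpt : ∀ i : {v // v ∈ I}, (∑ k : Fin d,
        (pinnedRigidityMatrix d I ep p) e (i, k) * x ((i : V), k))
      = (if (i : V) = u then ∑ k, (p u k - p w k) * x ((i : V), k) else 0)
        + (if (i : V) = w then ∑ k, (p w k - p u k) * x ((i : V), k) else 0) := by
    intro i
    by_cases h1 : (i : V) = u
    · by_cases h2 : (i : V) = w
      · have huw : u = w := h1.symm.trans h2
        subst huw
        simp [hM, h1]
      · have h2' : ¬ u = w := h1 ▸ h2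
        simp [hM, h1, h2, h2']
    · by_cases h2 : (i : V) = w
      · have h1' : ¬ w = u := h2 ▸ h1
        simp [hM, h1, h2, h1']
      · simp [hM, h1, h2]
  rw [Finset.sum_congr rfl (fun i _ => hpt i), Finset.sum_add_distrib]
  have hsub : ∀ (a : V) (f : V → ℝ),
      (∑ i : {v // v ∈ I}, if (i : V) = a then f (i : V) else 0)
        = if a ∈ I then f a else 0 := by
    intro a f
    rw [← Finset.sum_subtype (p := fun v => v ∈ I) (s := I)
      (f := fun v => if v = a then f v else 0) (fun x => Iff.rfl)]
    exact Finset.sum_ite_eq' I a f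
  rw [hsub u (fun v => ∑ k, (p u k - p w k) * x (v, k)),
    hsub w (fun v => ∑ k, (p w k - p u k) * x (v, k))]
  have hpull : ∀ (c : Prop) [Decidable c] (f : Fin d → ℝ),
      (if c then ∑ k, f k else 0) = ∑ k, (if c then f k else 0) := by
    intro c _ f; split <;> simp
  rw [hpull, hpull, ← Finset.sum_add_distrib]
  apply Finset.sum_congr rfl
  intro k _
  by_cases hu : u ∈ I <;> by_cases hw : w ∈ I <;> simp [hu, hw] <;> ring

lemma ker_eq_bot_of_rank_eq_card {m n : Type*} [Fintype m] [Fintype n]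
    (A : Matrix m n ℝ) (h : A.rank = Fintype.card n) :
    LinearMap.ker A.mulVecLin = ⊥ := by
  have hrn := LinearMap.finrank_range_add_finrank_ker A.mulVecLin
  rw [Module.finrank_fintype_fun_eq_card] at hrn
  rw [Matrix.rank] at h
  have : Module.finrank ℝ (LinearMap.ker A.mulVecLin) = 0 := by omega
  exact Submodule.finrank_eq_zero.mp this

/-- homogeneous coordinates -/
def phat {V : Type*} (d : ℕ) (p : V → Fin d → ℝ) (v : V) (l : Fin (d + 1)) : ℝ :=
  if h : (l : ℕ) < d then p v ⟨(l : ℕ), h⟩ else 1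

/-- infinitesimal trivial motion attached to a pair of homogeneous indices -/
def trivMotion {V : Type*} (d : ℕ) (p : V → Fin d → ℝ)
    (a : Fin (d + 1) × Fin (d + 1)) : (V × Fin d) → ℝ :=
  fun vk => (if (vk.2 : ℕ) = (a.1 : ℕ) then phat d p vk.1 a.2 else 0)
          - (if (vk.2 : ℕ) = (a.2 : ℕ) then phat d p vk.1 a.1 else 0)

lemma key_sum {V : Type*} (d : ℕ) (p : V → Fin d → ℝ) (u w : V) (l : Fin (d + 1)) :
    (∑ k : Fin d, if (k : ℕ) = (l : ℕ) then (p u k - p w k) else 0)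
      = phat d p u l - phat d p w l := by
  by_cases h : (l : ℕ) < d
  · rw [Finset.sum_eq_single (⟨(l : ℕ), h⟩ : Fin d)]
    · simp [phat, h]
    · intro k _ hk
      have : (k : ℕ) ≠ (l : ℕ) := fun hc => hk (Fin.ext hc)
      simp [this]
    · simp
  · have h0 : ∀ k : Fin d, ((k : ℕ) = (l : ℕ)) = False := by
      intro k; simp only [eq_iff_iff, iff_false]
      exact fun hc => h (hc ▸ k.isLt)
    simp only [h0, if_false, Finset.sum_const_zero, phat, dif_neg h]
    ring

lemma trivMotion_row {V : Type*} [Fintype V] (d : ℕ) (p : V → Fin d → ℝ)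
    (a : Fin (d + 1) × Fin (d + 1)) (u w : V) :
    ∑ k : Fin d, (p u k - p w k) * (trivMotion d p a (u, k) - trivMotion d p a (w, k)) = 0 := by
  have expand : ∀ k : Fin d,
      (p u k - p w k) * (trivMotion d p a (u, k) - trivMotion d p a (w, k))
      = (if (k : ℕ) = (a.1 : ℕ) then (p u k - p w k) else 0) * (phat d p u a.2 - phat d p w a.2)
        - (if (k : ℕ) = (a.2 : ℕ) then (p u k - p w k) else 0) * (phat d p u a.1 - phat d p w a.1) := by
    intro k
    unfold trivMotion
    by_cases h1 : (k : ℕ) = (a.1 : ℕ) <;> by_cases h2 : (k : ℕ) = (a.2 : ℕ)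
    · have h12 : (a.1 : ℕ) = (a.2 : ℕ) := h1 ▸ h2
      simp [h1, h2, h12]
      all_goals ring
    · have h12 : ¬ (a.1 : ℕ) = (a.2 : ℕ) := h1 ▸ h2
      simp [h1, h2, h12]
      all_goals ring
    · have h12 : ¬ (a.2 : ℕ) = (a.1 : ℕ) := h2 ▸ h1
      simp [h1, h2, h12]
      all_goals ring
    · simp [h1, h2]
  rw [Finset.sum_congr rfl (fun k _ => expand k), Finset.sum_sub_distrib,
    ← Finset.sum_mul, ← Finset.sum_mul, key_sum, key_sum]
  ring

lemma sum_ite_fin' {d : ℕ} (k : Fin d) (f : Fin (d + 1) → ℝ) :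
    (∑ i : Fin (d + 1), if (k : ℕ) = (i : ℕ) then f i else 0) = f (Fin.castSucc k) := by
  rw [Finset.sum_eq_single (Fin.castSucc k)]
  · simp
  · intro i _ hne
    have : ¬ (k : ℕ) = (i : ℕ) := fun hc => hne (by
      apply Fin.ext; simpa using hc.symm)
    simp [this]
  · simp

lemma trivMotion_linearIndependent {V : Type*} [Fintype V] [Nonempty V] (d : ℕ)
    (p : V → Fin d → ℝ)
    (hspan : ∀ c : Fin d → ℝ, (∀ u w : V, (∑ k, (p u k - p w k) * c k) = 0) → c = 0) :
    LinearIndependent ℝ (fun a : {a : Fin (d + 1) × Fin (d + 1) // a.1 < a.2} =>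
      trivMotion d p a.1) := by
  classical
  rw [Fintype.linearIndependent_iff]
  intro c hc
  set S : Fin (d + 1) → Fin (d + 1) → ℝ := fun i j =>
    if h : i < j then c ⟨(i, j), h⟩ else if h' : j < i then -c ⟨(j, i), h'⟩ else 0 with hS
  have hSdiag : ∀ i, S i i = 0 := by
    intro i; simp [hS]
  have hSskew : ∀ i j, S j i = -S i j := by
    intro i j
    rcases lt_trichotomy i j with h | h | h
    · simp only [hS]
      rw [dif_neg (asymm h), dif_pos h, dif_pos h]
    · subst h; simp [hS]
    · simp only [hS]
      rw [dif_pos h, dif_neg (asymm h), dif_pos h, neg_neg]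
  have hc' : ∀ vk : V × Fin d,
      (∑ a : {a : Fin (d + 1) × Fin (d + 1) // a.1 < a.2}, c a * trivMotion d p a.1 vk) = 0 := by
    intro vk
    simpa using congrFun hc vk
  have hrow : ∀ (v : V) (k : Fin d),
      (∑ l : Fin (d + 1), S (Fin.castSucc k) l * phat d p v l) = 0 := by
    intro v k
    set g : Fin (d + 1) × Fin (d + 1) → ℝ := fun x =>
      S x.1 x.2 * ((if (k : ℕ) = (x.1 : ℕ) then phat d p v x.2 else 0)
        - (if (k : ℕ) = (x.2 : ℕ) then phat d p v x.1 else 0)) with hg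
    have e1 : (∑ a : {a : Fin (d + 1) × Fin (d + 1) // a.1 < a.2}, c a * trivMotion d p a.1 (v, k))
        = ∑ a : {a : Fin (d + 1) × Fin (d + 1) // a.1 < a.2}, g a.1 := by
      apply Finset.sum_congr rfl
      intro a _
      have hca : c a = S a.1.1 a.1.2 := by
        simp only [hS]
        rw [dif_pos a.2]
      rw [hca]
      rfl
    have e2 : (∑ a : {a : Fin (d + 1) × Fin (d + 1) // a.1 < a.2}, g a.1)
        = ∑ x ∈ Finset.univ.filter (fun x : Fin (d + 1) × Fin (d + 1) => x.1 < x.2), g x := by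
      exact (Finset.sum_subtype
        (Finset.univ.filter (fun x : Fin (d + 1) × Fin (d + 1) => x.1 < x.2)) (by simp) g).symm
    have hgswap : ∀ x : Fin (d + 1) × Fin (d + 1), g (x.2, x.1) = g x := by
      intro x
      simp only [hg]
      rw [hSskew]
      ring
    have hgdiag : ∀ x : Fin (d + 1) × Fin (d + 1), x.1 = x.2 → g x = 0 := by
      intro x hx
      simp only [hg]
      rw [show x.1 = x.2 from hx, hSdiag, zero_mul]
    have e3 : (∑ x ∈ Finset.univ.filter
          (fun x : Fin (d + 1) × Fin (d + 1) => ¬ x.1 < x.2), g x)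
        = ∑ x ∈ Finset.univ.filter (fun x : Fin (d + 1) × Fin (d + 1) => x.1 < x.2), g x := by
      rw [Finset.sum_filter, Finset.sum_filter]
      have step1 : (∑ x : Fin (d + 1) × Fin (d + 1), if ¬ x.1 < x.2 then g x else 0)
          = ∑ x : Fin (d + 1) × Fin (d + 1), if x.2 < x.1 then g x else 0 := by
        apply Finset.sum_congr rfl
        intro x _
        rcases lt_trichotomy x.1 x.2 with h | h | h
        · simp [h, asymm h]
        · simp [h, hgdiag x h, lt_irrefl]
        · simp [h, asymm h, not_lt.mpr h.le]
      rw [step1]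
      apply Fintype.sum_equiv (Equiv.prodComm (Fin (d + 1)) (Fin (d + 1)))
      intro x
      by_cases h : x.2 < x.1
      · simp only [Equiv.prodComm_apply, Prod.swap]
        rw [if_pos h]; simp only [h, ↓reduceIte]
        exact (hgswap x).symm
      · simp only [Equiv.prodComm_apply, Prod.swap]
        rw [if_neg h]; simp only [h, ↓reduceIte]
    have e4 : (∑ x : Fin (d + 1) × Fin (d + 1), g x)
        = 2 * ∑ l : Fin (d + 1), S (Fin.castSucc k) l * phat d p v l := by
      rw [Fintype.sum_prod_type]
      have expand : ∀ i j : Fin (d + 1), g (i, j)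
          = (if (k : ℕ) = (i : ℕ) then S i j * phat d p v j else 0)
            - (if (k : ℕ) = (j : ℕ) then S i j * phat d p v i else 0) := by
        intro i j
        simp only [hg]
        by_cases h1 : (k : ℕ) = (i : ℕ) <;> by_cases h2 : (k : ℕ) = (j : ℕ) <;>
          (simp [h1, h2]; all_goals (split <;> ring))
      simp only [expand]
      rw [Finset.sum_congr rfl (fun i _ => Finset.sum_sub_distrib _ _)]
      rw [Finset.sum_sub_distrib]
      have t1 : (∑ i : Fin (d + 1), ∑ j : Fin (d + 1),
            if (k : ℕ) = (i : ℕ) then S i j * phat d p v j else 0)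
          = ∑ j : Fin (d + 1), S (Fin.castSucc k) j * phat d p v j := by
        have : ∀ i : Fin (d + 1), (∑ j : Fin (d + 1),
              if (k : ℕ) = (i : ℕ) then S i j * phat d p v j else 0)
            = if (k : ℕ) = (i : ℕ) then ∑ j : Fin (d + 1), S i j * phat d p v j else 0 := by
          intro i; split <;> simp
        rw [Finset.sum_congr rfl (fun i _ => this i)]
        exact sum_ite_fin' k (fun i => ∑ j : Fin (d + 1), S i j * phat d p v j)
      have t2 : (∑ i : Fin (d + 1), ∑ j : Fin (d + 1),
            if (k : ℕ) = (j : ℕ) then S i j * phat d p v i else 0)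
          = -∑ l : Fin (d + 1), S (Fin.castSucc k) l * phat d p v l := by
        rw [Finset.sum_comm]
        have : ∀ j : Fin (d + 1), (∑ i : Fin (d + 1),
              if (k : ℕ) = (j : ℕ) then S i j * phat d p v i else 0)
            = if (k : ℕ) = (j : ℕ) then ∑ i : Fin (d + 1), S i j * phat d p v i else 0 := by
          intro j; split <;> simp
        rw [Finset.sum_congr rfl (fun j _ => this j)]
        rw [sum_ite_fin' k (fun j => ∑ i : Fin (d + 1), S i j * phat d p v i)]
        rw [← Finset.sum_neg_distrib]
        apply Finset.sum_congr rfl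
        intro i _
        rw [hSskew (Fin.castSucc k) i]
        ring
      rw [t1, t2]
      ring
    have hzero : (∑ x ∈ Finset.univ.filter
          (fun x : Fin (d + 1) × Fin (d + 1) => x.1 < x.2), g x) = 0 := by
      rw [← e2, ← e1]
      exact hc' (v, k)
    have htotal := Finset.sum_filter_add_sum_filter_not Finset.univ
      (fun x : Fin (d + 1) × Fin (d + 1) => x.1 < x.2) g
    rw [hzero, e3, hzero] at htotal
    rw [e4] at htotal
    have : (2 : ℝ) * ∑ l : Fin (d + 1), S (Fin.castSucc k) l * phat d p v l = 0 := by
      linarith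
    linarith
  -- now kill the entries of S
  have hSfin : ∀ (k l : Fin d), S (Fin.castSucc k) (Fin.castSucc l) = 0 := by
    intro k l
    have hcv : (fun m : Fin d => S (Fin.castSucc k) (Fin.castSucc m)) = 0 := by
      apply hspan
      intro u w
      have hd := sub_eq_zero.mpr (congrArg₂ (fun a b => a) (hrow u k) (hrow w k))
      have huw : (∑ l : Fin (d + 1), S (Fin.castSucc k) l * (phat d p u l - phat d p w l)) = 0 := by
        rw [Finset.sum_congr rfl (fun l _ => by ring :
          ∀ l ∈ Finset.univ, S (Fin.castSucc k) l * (phat d p u l - phat d p w l)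
            = S (Fin.castSucc k) l * phat d p u l - S (Fin.castSucc k) l * phat d p w l)]
        rw [Finset.sum_sub_distrib, hrow u k, hrow w k, sub_zero]
      rw [Fin.sum_univ_castSucc] at huw
      have hlast : phat d p u (Fin.last d) - phat d p w (Fin.last d) = 0 := by
        simp [phat]
      rw [hlast, mul_zero, add_zero] at huw
      rw [← huw]
      apply Finset.sum_congr rfl
      intro m _
      have hm : phat d p u (Fin.castSucc m) - phat d p w (Fin.castSucc m) = p u m - p w m := by
        have hlt : ((Fin.castSucc m : Fin (d + 1)) : ℕ) < d := by simpa using m.isLt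
        simp only [phat, dif_pos hlt]
        congr 1
      rw [hm]
      ring
    exact congrFun hcv l
  have hSlast : ∀ k : Fin d, S (Fin.castSucc k) (Fin.last d) = 0 := by
    intro k
    obtain ⟨v⟩ := ‹Nonempty V›
    have := hrow v k
    rw [Fin.sum_univ_castSucc] at this
    have hz : (∑ m : Fin d, S (Fin.castSucc k) (Fin.castSucc m) * phat d p v (Fin.castSucc m)) = 0 := by
      apply Finset.sum_eq_zero
      intro m _
      rw [hSfin k m, zero_mul]
    rw [hz, zero_add] at this
    have hp1 : phat d p v (Fin.last d) = 1 := by simp [phat]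
    rw [hp1, mul_one] at this
    exact this
  intro a
  obtain ⟨⟨i, j⟩, hij⟩ := a
  have hca : c ⟨(i, j), hij⟩ = S i j := by
    simp only [hS]
    rw [dif_pos hij]
  rw [hca]
  have hival : (i : ℕ) < d := by
    have h1 : (i : ℕ) < (j : ℕ) := hij
    have h2 : (j : ℕ) < d + 1 := j.isLt
    omega
  have hi : Fin.castSucc (⟨(i : ℕ), hival⟩ : Fin d) = i := by
    apply Fin.ext; simp
  by_cases hj : (j : ℕ) < d
  · have hj2 : Fin.castSucc (⟨(j : ℕ), hj⟩ : Fin d) = j := by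
      apply Fin.ext; simp
    rw [← hi, ← hj2]
    exact hSfin _ _
  · have hjlast : j = Fin.last d := by
      apply Fin.ext
      have := j.isLt
      simp only [Fin.val_last]
      omega
    rw [← hi, hjlast]
    exact hSlast _

lemma choose_two_le_card_lt (n : ℕ) :
    (n + 1).choose 2 ≤ Fintype.card {a : Fin (n + 1) × Fin (n + 1) // a.1 < a.2} := by
  classical
  have h := Fintype.card_finset_len (α := Fin (n + 1)) 2
  rw [Fintype.card_fin] at h
  rw [← h]
  have hne : ∀ s : {s : Finset (Fin (n + 1)) // s.card = 2}, s.1.Nonempty := by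
    intro s
    apply Finset.card_pos.mp
    rw [s.2]
    norm_num
  have hlt : ∀ s : {s : Finset (Fin (n + 1)) // s.card = 2},
      s.1.min' (hne s) < s.1.max' (hne s) := by
    intro s
    have h2 : 1 < s.1.card := by rw [s.2]; norm_num
    exact Finset.min'_lt_max'_of_card (s := s.1) h2
  apply Fintype.card_le_of_injective
    (fun s => ⟨(s.1.min' (hne s), s.1.max' (hne s)), hlt s⟩)
  intro s t hst
  have h1 : s.1.min' (hne s) = t.1.min' (hne t) := congrArg (fun a => a.1.1) hst
  have h2 : s.1.max' (hne s) = t.1.max' (hne t) := congrArg (fun a => a.1.2) hst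
  have key : ∀ u : {s : Finset (Fin (n + 1)) // s.card = 2},
      u.1 = {u.1.min' (hne u), u.1.max' (hne u)} := by
    intro u
    apply (Finset.eq_of_subset_of_card_le ?_ ?_).symm
    · intro x hx
      rcases Finset.mem_insert.mp hx with hx | hx
      · rw [hx]; exact Finset.min'_mem _ _
      · rw [Finset.mem_singleton.mp hx]; exact Finset.max'_mem _ _
    · rw [u.2, Finset.card_pair (hlt u).ne]
  apply Subtype.ext
  rw [key s, key t, h1, h2]


/-- Gluing a rigid graph `G₁` on vertex set `V₁` to a pinned rigid graph `G₂`
with inner vertices `I₂` and pinned vertices `P₂ ⊆ V₁`, `|P₂| ≥ d`, with edge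
sets disjoint: the union is infinitesimally rigid in `ℝ^d`, i.e. its rigidity
matrix has rank exactly `d|V(G)| - C(d+1,2)`. -/
theorem rank_union_of_rigid_and_pinnedRigid {V E₁ E₂ : Type*}
    [Fintype V] [DecidableEq V] [Fintype E₁] [Fintype E₂]
    (d : ℕ) (V₁ I₂ P₂ : Finset V)
    (hcover : V₁ ∪ I₂ = Finset.univ) (hdisj : Disjoint V₁ I₂)
    (hP : P₂ ⊆ V₁) (hPd : d ≤ P₂.card)
    (ep₁ : E₁ → V × V) (hep₁ : ∀ e, (ep₁ e).1 ∈ V₁ ∧ (ep₁ e).2 ∈ V₁)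
    (ep₂ : E₂ → V × V)
    (hep₂ : ∀ e, (ep₂ e).1 ∈ I₂ ∧ ((ep₂ e).2 ∈ I₂ ∨ (ep₂ e).2 ∈ P₂))
    (p : V → Fin d → ℝ)
    (hr₁ : (rigidityMatrix d ep₁ p).rank = d * V₁.card - (d + 1).choose 2)
    (hr₂ : (pinnedRigidityMatrix d I₂ ep₂ p).rank = d * I₂.card) :
    (rigidityMatrix d (Sum.elim ep₁ ep₂) p).rank =
      d * Fintype.card V - (d + 1).choose 2 := by
  classical
  set M := rigidityMatrix d (Sum.elim ep₁ ep₂) p with hMdef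
  set R₁ := rigidityMatrix d ep₁ p with hR₁def
  set B := pinnedRigidityMatrix d I₂ ep₂ p with hBdef
  -- numerics
  have hcard : Fintype.card V = V₁.card + I₂.card := by
    rw [← Finset.card_union_of_disjoint hdisj, hcover, Finset.card_univ]
  have hdV₁ : d ≤ V₁.card := le_trans hPd (Finset.card_le_card hP)
  have hC2 : 2 * ((d + 1).choose 2) = d * (d + 1) := two_mul_choose_two d
  have hCle : (d + 1).choose 2 ≤ d * V₁.card := by
    have h2 : d ≤ d * d := by
      rcases Nat.eq_zero_or_pos d with h | h
      · simp [h]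
      · calc d = d * 1 := (Nat.mul_one d).symm
          _ ≤ d * d := Nat.mul_le_mul_left d h
    have h1 : d * d ≤ d * V₁.card := Nat.mul_le_mul_left d hdV₁
    have hC2' : d * (d + 1) = d * d + d := by ring
    omega
  have hr₁' : R₁.rank + (d + 1).choose 2 = d * V₁.card := by
    rw [hr₁]
    exact Nat.sub_add_cancel hCle
  -- rank-nullity
  have hrnM : M.rank + Module.finrank ℝ (LinearMap.ker M.mulVecLin)
      = Fintype.card V * d := by
    have h := LinearMap.finrank_range_add_finrank_ker M.mulVecLin
    rw [Module.finrank_fintype_fun_eq_card, Fintype.card_prod, Fintype.card_fin] at h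
    exact h
  have hrnR₁ : R₁.rank + Module.finrank ℝ (LinearMap.ker R₁.mulVecLin)
      = Fintype.card V * d := by
    have h := LinearMap.finrank_range_add_finrank_ker R₁.mulVecLin
    rw [Module.finrank_fintype_fun_eq_card, Fintype.card_prod, Fintype.card_fin] at h
    exact h
  -- the restriction map to the V₁-coordinates
  set f : ({v // v ∈ V₁} × Fin d) → (V × Fin d) := fun jk => ((jk.1 : V), jk.2) with hfdef
  have hfinj : Function.Injective f := by
    intro a b hab
    have h1 : (a.1 : V) = (b.1 : V) := congrArg (fun z : V × Fin d => z.1) hab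
    have h2 : a.2 = b.2 := congrArg (fun z : V × Fin d => z.2) hab
    exact Prod.ext (Subtype.ext h1) h2
  set π : ((V × Fin d) → ℝ) →ₗ[ℝ] (({v // v ∈ V₁} × Fin d) → ℝ)
    := LinearMap.funLeft ℝ ℝ f with hπdef
  have hπsurj : Function.Surjective π :=
    LinearMap.funLeft_surjective_of_injective ℝ ℝ f hfinj
  have hkerπ : ∀ x ∈ LinearMap.ker π, ∀ vk : V × Fin d, vk.1 ∈ V₁ → x vk = 0 := by
    intro x hx vk hv
    obtain ⟨v, k⟩ := vk
    have := congrFun (LinearMap.mem_ker.mp hx) (⟨v, hv⟩, k)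
    simpa [hπdef, LinearMap.funLeft, hfdef] using this
  have hkerπ_rank : Module.finrank ℝ (LinearMap.ker π) + V₁.card * d
      = Fintype.card V * d := by
    have h := LinearMap.finrank_range_add_finrank_ker π
    rw [LinearMap.range_eq_top.mpr hπsurj, finrank_top,
      Module.finrank_fintype_fun_eq_card, Module.finrank_fintype_fun_eq_card,
      Fintype.card_prod, Fintype.card_prod, Fintype.card_fin, Fintype.card_coe] at h
    omega
  -- K ≤ ker R₁
  have hKleR₁ : LinearMap.ker M.mulVecLin ≤ LinearMap.ker R₁.mulVecLin := by
    intro x hx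
    rw [LinearMap.mem_ker] at hx ⊢
    funext e
    have h1 : R₁.mulVecLin x e = M.mulVecLin x (Sum.inl e) := rfl
    rw [h1, hx]
    rfl
  -- ker π ≤ ker R₁
  have hkerπleR₁ : LinearMap.ker π ≤ LinearMap.ker R₁.mulVecLin := by
    intro x hx
    rw [LinearMap.mem_ker]
    funext e
    rw [Matrix.mulVecLin_apply, hR₁def, rigidity_row_dot]
    rw [Pi.zero_apply]
    apply Finset.sum_eq_zero
    intro k _
    rw [hkerπ x hx ((ep₁ e).1, k) (hep₁ e).1, hkerπ x hx ((ep₁ e).2, k) (hep₁ e).2]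
    ring
  -- full column rank of B
  have hkerB : LinearMap.ker B.mulVecLin = ⊥ := by
    apply ker_eq_bot_of_rank_eq_card
    rw [hr₂, Fintype.card_prod, Fintype.card_fin, Fintype.card_coe]
    ring
  -- injectivity of π on ker M
  have hinj : ∀ x ∈ LinearMap.ker M.mulVecLin, π x = 0 → x = 0 := by
    intro x hx hπx
    have hxV₁ : ∀ vk : V × Fin d, vk.1 ∈ V₁ → x vk = 0 :=
      hkerπ x (LinearMap.mem_ker.mpr hπx)
    have hy : B.mulVec (fun ik => x ((ik.1 : V), ik.2)) = 0 := by
      funext e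
      rw [hBdef, pinned_row_dot d I₂ ep₂ p e x]
      have hMe : (∑ k, (p (ep₂ e).1 k - p (ep₂ e).2 k)
          * (x ((ep₂ e).1, k) - x ((ep₂ e).2, k))) = (0 : ℝ) := by
        have h0 : M.mulVec x = 0 := hx
        have h1 := congrFun h0 (Sum.inr e)
        rw [hMdef, rigidity_row_dot] at h1
        simpa using h1
      rw [Pi.zero_apply]
      refine Eq.trans (Finset.sum_congr rfl fun k _ => ?_) hMe
      rcases (hep₂ e).2 with h2 | h2
      · simp [(hep₂ e).1, h2]
      · have hnot : (ep₂ e).2 ∉ I₂ := Finset.disjoint_left.mp hdisj (hP h2)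
        simp [(hep₂ e).1, hnot, hxV₁ ((ep₂ e).2, k) (hP h2)]
    have hy0 : (fun ik : {v // v ∈ I₂} × Fin d => x ((ik.1 : V), ik.2)) = 0 := by
      have hm : (fun ik : {v // v ∈ I₂} × Fin d => x ((ik.1 : V), ik.2))
          ∈ LinearMap.ker B.mulVecLin := LinearMap.mem_ker.mpr hy
      rwa [hkerB, Submodule.mem_bot] at hm
    funext vk
    obtain ⟨v, k⟩ := vk
    have hvu : v ∈ V₁ ∪ I₂ := by rw [hcover]; exact Finset.mem_univ v
    rcases Finset.mem_union.mp hvu with hv | hv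
    · exact hxV₁ (v, k) hv
    · exact congrFun hy0 (⟨v, hv⟩, k)
  -- finrank of ker M equals finrank of its image under π
  have hKmap : Module.finrank ℝ (LinearMap.ker M.mulVecLin)
      = Module.finrank ℝ ((LinearMap.ker M.mulVecLin).map π) := by
    have h := LinearMap.finrank_range_add_finrank_ker
      (π.domRestrict (LinearMap.ker M.mulVecLin))
    have hker0 : LinearMap.ker (π.domRestrict (LinearMap.ker M.mulVecLin)) = ⊥ := by
      rw [LinearMap.ker_eq_bot']
      intro x hx0
      exact Subtype.ext (hinj x.1 x.2 hx0)
    rw [hker0, finrank_bot, LinearMap.range_domRestrict] at h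
    omega
  have hfr : Module.finrank ℝ ((LinearMap.ker R₁.mulVecLin).map π)
      + Module.finrank ℝ (LinearMap.ker π)
      = Module.finrank ℝ (LinearMap.ker R₁.mulVecLin) := by
    have h := LinearMap.finrank_range_add_finrank_ker
      (π.domRestrict (LinearMap.ker R₁.mulVecLin))
    rw [LinearMap.range_domRestrict, LinearMap.ker_domRestrict] at h
    have heq : Module.finrank ℝ
        (Submodule.comap (LinearMap.ker R₁.mulVecLin).subtype (LinearMap.ker π))
        = Module.finrank ℝ (LinearMap.ker π) :=
      LinearEquiv.finrank_eq (Submodule.comapSubtypeEquivOfLe hkerπleR₁)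
    rw [heq] at h
    exact h
  have hle2 : Module.finrank ℝ ((LinearMap.ker M.mulVecLin).map π)
      ≤ Module.finrank ℝ ((LinearMap.ker R₁.mulVecLin).map π) :=
    Submodule.finrank_mono (Submodule.map_mono hKleR₁)
  have hker_le : Module.finrank ℝ (LinearMap.ker M.mulVecLin) ≤ (d + 1).choose 2 := by
    have hcm : d * V₁.card = V₁.card * d := Nat.mul_comm _ _
    rw [hKmap]
    linarith [hle2, hfr, hrnR₁, hr₁', hkerπ_rank, hcard]
  -- lower bound on the kernel
  have hker_ge : (d + 1).choose 2 ≤ Module.finrank ℝ (LinearMap.ker M.mulVecLin) := by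
    rcases Finset.eq_empty_or_nonempty I₂ with hI | hI
    · -- no inner vertices: E₂ is empty and M is essentially R₁
      have hE₂ : IsEmpty E₂ := ⟨fun e => by
        have := (hep₂ e).1
        rw [hI] at this
        exact absurd this (Finset.notMem_empty _)⟩
      have hKeq : LinearMap.ker M.mulVecLin = LinearMap.ker R₁.mulVecLin := by
        apply le_antisymm hKleR₁
        intro x hx
        rw [LinearMap.mem_ker] at hx ⊢
        funext e
        cases e with
        | inl e₁ =>
          have h1 : M.mulVecLin x (Sum.inl e₁) = R₁.mulVecLin x e₁ := rfl
          rw [h1, hx]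
          rfl
        | inr e₂ => exact (hE₂.false e₂).elim
      have hV₁card : V₁.card = Fintype.card V := by
        rw [hcard, hI]
        simp
      rw [hKeq]
      have hcm : d * V₁.card = V₁.card * d := Nat.mul_comm _ _
      have hcm2 : Fintype.card V * d = V₁.card * d := by rw [hV₁card]
      linarith [hrnR₁, hr₁']
    · -- there is an inner vertex: p spans, use the trivial motions
      obtain ⟨i₀, hi₀⟩ := hI
      have hNV : Nonempty V := ⟨i₀⟩
      have hspan : ∀ c : Fin d → ℝ,
          (∀ u w : V, (∑ k, (p u k - p w k) * c k) = 0) → c = 0 := by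
        intro c hcw
        have hy : B.mulVec (fun ik : {v // v ∈ I₂} × Fin d =>
            (fun vk : V × Fin d => c vk.2) ((ik.1 : V), ik.2)) = 0 := by
          funext e
          rw [hBdef, pinned_row_dot d I₂ ep₂ p e (fun vk : V × Fin d => c vk.2)]
          rw [Pi.zero_apply]
          rcases (hep₂ e).2 with h2 | h2
          · apply Finset.sum_eq_zero
            intro k _
            simp [(hep₂ e).1, h2]
          · have hnot : (ep₂ e).2 ∉ I₂ := Finset.disjoint_left.mp hdisj (hP h2)
            refine Eq.trans (Finset.sum_congr rfl fun k _ => ?_) (hcw (ep₂ e).1 (ep₂ e).2)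
            simp only [if_pos (hep₂ e).1, if_neg hnot]
            ring
        have hm : (fun ik : {v // v ∈ I₂} × Fin d => c ik.2)
            ∈ LinearMap.ker B.mulVecLin := LinearMap.mem_ker.mpr hy
        rw [hkerB, Submodule.mem_bot] at hm
        funext k
        exact congrFun hm (⟨i₀, hi₀⟩, k)
      have hmem : ∀ a : Fin (d + 1) × Fin (d + 1),
          trivMotion d p a ∈ LinearMap.ker M.mulVecLin := by
        intro a
        rw [LinearMap.mem_ker]
        funext e
        rw [Matrix.mulVecLin_apply, hMdef, rigidity_row_dot, Pi.zero_apply]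
        exact trivMotion_row d p a _ _
      have hind := trivMotion_linearIndependent d p hspan
      have hind2 : LinearIndependent ℝ
          (fun a : {a : Fin (d + 1) × Fin (d + 1) // a.1 < a.2} =>
            (⟨trivMotion d p a.1, hmem a.1⟩ : LinearMap.ker M.mulVecLin)) :=
        LinearIndependent.of_comp ((LinearMap.ker M.mulVecLin).subtype) hind
      exact le_trans (choose_two_le_card_lt d) hind2.fintype_card_le_finrank
  -- conclude
  have hkerfin : Module.finrank ℝ (LinearMap.ker M.mulVecLin) = (d + 1).choose 2 :=
    le_antisymm hker_le hker_ge
  have hfinal : M.rank + (d + 1).choose 2 = d * Fintype.card V := by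
    have hcm : d * Fintype.card V = Fintype.card V * d := Nat.mul_comm _ _
    rw [← hkerfin, hrnM, hcm]
  exact Nat.eq_sub_of_add_eq hfinal
end

section
/- If two graphs G₁ and G₂ are each generically rigid in R^d and share at least d vertices (|V(G₁) ∩ V(G₂)| ≥ d), then G₁ ∪ G₂ is generically rigid in R^d. -/
/-- The maximal rank `S(n,d)` of a rigidity matrix on `n` vertices in `ℝ^d`. -/
def rankBound (n d : ℕ) : ℕ :=
  if d + 2 ≤ n then n * d - (d + 1).choose 2 else n.choose 2


open Module Matrix


open Module Matrix

section Minors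

variable {m n : Type*} {r : ℕ}
set_option linter.unusedSectionVars false

/-- A matrix with some nonzero `r × r` minor has rank at least `r`. -/
lemma rank_ge_of_det_ne_zero [Fintype m] [Fintype n] [DecidableEq n] (M : Matrix m n ℝ) (f : Fin r → m) (g : Fin r → n)
    (h : (M.submatrix f g).det ≠ 0) : r ≤ M.rank := by
  have hsub : (M.submatrix f g).rank = r := by
    rw [Matrix.rank_of_isUnit _ ((Matrix.isUnit_iff_isUnit_det _).2 (isUnit_iff_ne_zero.2 h))]
    simp
  have hle : (M.submatrix f g).rank ≤ M.rank := by
    have key : ∀ u : Fin r → ℝ, (M.submatrix f g).mulVec u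
        = (M.mulVec (fun j => ∑ i : Fin r, if g i = j then u i else 0)) ∘ f := by
      intro u; funext i0
      simp only [Matrix.mulVec, dotProduct, Function.comp_apply, Matrix.submatrix_apply]
      symm
      simp only [Finset.mul_sum, mul_ite, mul_zero]
      rw [Finset.sum_comm]
      simp [Finset.sum_ite_eq]
    have hrange : LinearMap.range (M.submatrix f g).mulVecLin ≤
        Submodule.map (LinearMap.funLeft ℝ ℝ f) (LinearMap.range M.mulVecLin) := by
      rintro x ⟨u, rfl⟩
      exact ⟨M.mulVec (fun j => ∑ i : Fin r, if g i = j then u i else 0), ⟨_, rfl⟩, (key u).symm⟩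
    calc (M.submatrix f g).rank ≤ finrank ℝ
          (Submodule.map (LinearMap.funLeft ℝ ℝ f) (LinearMap.range M.mulVecLin)) :=
        Submodule.finrank_mono hrange
      _ ≤ finrank ℝ (LinearMap.range M.mulVecLin) := Submodule.finrank_map_le _ _
      _ = M.rank := rfl
  omega

/-- From rank ≥ r, extract r linearly independent columns. -/
lemma exists_indep_cols [Fintype n] (M : Matrix m n ℝ) (h : r ≤ M.rank) :
    ∃ g : Fin r → n, LinearIndependent ℝ (fun i => Mᵀ (g i)) := by
  obtain ⟨b, hbsub, hbspan, hbind⟩ := exists_linearIndependent ℝ (Set.range Mᵀ)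
  have hfin : b.Finite := (Set.finite_range Mᵀ).subset hbsub
  haveI := hfin.fintype
  have hcard : r ≤ Fintype.card b := by
    have h2 : finrank ℝ (Submodule.span ℝ b) = Fintype.card b := by
      have h3 : LinearIndependent ℝ (fun x : b => (x : m → ℝ)) := hbind
      have h4 := finrank_span_eq_card h3
      rwa [Subtype.range_coe] at h4
    rw [Matrix.rank_eq_finrank_span_cols, show M.col = Mᵀ from rfl, ← hbspan, h2] at h
    exact h
  obtain ⟨emb⟩ := Function.Embedding.nonempty_of_card_le (α := Fin r) (β := b) (by simpa using hcard)
  have hsel : ∀ i : Fin r, ∃ j : n, Mᵀ j = ((emb i : b) : m → ℝ) := fun i => hbsub (emb i).2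
  choose g hg using hsel
  refine ⟨g, ?_⟩
  have heq : (fun i => Mᵀ (g i)) = (fun x : b => (x : m → ℝ)) ∘ emb := by
    funext i; simp [hg]
  rw [heq]
  exact hbind.comp emb emb.injective

/-- A real matrix of rank at least `r` has an invertible `r × r` submatrix. -/
lemma exists_submatrix_det_ne_zero [Fintype m] [Fintype n] (M : Matrix m n ℝ) (h : r ≤ M.rank) :
    ∃ (f : Fin r → m) (g : Fin r → n), (M.submatrix f g).det ≠ 0 := by
  obtain ⟨g, hg⟩ := exists_indep_cols M h
  set B : Matrix m (Fin r) ℝ := M.submatrix id g with hB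
  have hBrank : B.rank = r := by
    have hBt : Bᵀ = fun i => Mᵀ (g i) := by
      funext i j; simp [hB, Matrix.transpose_apply]
    rw [Matrix.rank_eq_finrank_span_cols, show B.col = Bᵀ from rfl, hBt, finrank_span_eq_card hg, Fintype.card_fin]
  have hBt : r ≤ Bᵀ.rank := by rw [Matrix.rank_transpose]; omega
  obtain ⟨f, hf⟩ := exists_indep_cols Bᵀ hBt
  refine ⟨f, g, ?_⟩
  have hli : LinearIndependent ℝ (fun i => (M.submatrix f g) i) := by
    have h4 : (fun i => (M.submatrix f g) i) = fun i => Bᵀᵀ (f i) := by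
      funext i j; simp [hB]
    rw [h4]; exact hf
  have := Matrix.linearIndependent_rows_iff_isUnit.mp hli
  rw [Matrix.isUnit_iff_isUnit_det] at this
  exact this.ne_zero

end Minors

section Engine

lemma exists_eval_ne_zero {σ : Type*} (g : MvPolynomial σ ℝ) (hg : g ≠ 0) :
    ∃ x : σ → ℝ, MvPolynomial.eval x g ≠ 0 := by
  by_contra hc
  push_neg at hc
  exact hg (MvPolynomial.funext (q := 0) (fun x => by simpa using hc x))

lemma rank_ge_of_poly {m n σ : Type*} [Fintype m] [Fintype n] [DecidableEq n]
    (P : Matrix m n (MvPolynomial σ ℝ)) (r : ℕ) (x₀ : σ → ℝ)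
    (h : r ≤ (P.map (MvPolynomial.eval x₀)).rank) :
    ∃ g : MvPolynomial σ ℝ, g ≠ 0 ∧
      ∀ x : σ → ℝ, MvPolynomial.eval x g ≠ 0 → r ≤ (P.map (MvPolynomial.eval x)).rank := by
  obtain ⟨f, gg, hdet⟩ := exists_submatrix_det_ne_zero _ h
  refine ⟨(P.submatrix f gg).det, ?_, ?_⟩
  · intro h0
    apply hdet
    have h1 := RingHom.map_det (MvPolynomial.eval x₀) (P.submatrix f gg)
    rw [h0] at h1
    have h2 : ((P.map ⇑(MvPolynomial.eval x₀)).submatrix f gg) =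
        (MvPolynomial.eval x₀).mapMatrix (P.submatrix f gg) := rfl
    rw [h2, ← h1]
    simp
  · intro x hx
    apply rank_ge_of_det_ne_zero (P.map (MvPolynomial.eval x)) f gg
    have := RingHom.map_det (MvPolynomial.eval x) (P.submatrix f gg)
    rw [show (MvPolynomial.eval x).mapMatrix (P.submatrix f gg)
        = (P.map (MvPolynomial.eval x)).submatrix f gg from rfl] at this
    rw [← this]
    exact hx

end Engine
section Core
variable {V : Type*} [Fintype V] [DecidableEq V]
set_option linter.unusedSectionVars false

/-- Index type for infinitesimal trivial motions: skew coordinates plus translations. -/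
abbrev SkewIdx (d : ℕ) := {q : Fin d × Fin d // q.1 < q.2} ⊕ Fin d

/-- Matrix whose columns span the trivial infinitesimal motions of placement `p`. -/
def Phi (d : ℕ) (p : V → Fin d → ℝ) : Matrix (V × Fin d) (SkewIdx d) ℝ :=
  fun vk c =>
    match c with
    | Sum.inl q => if q.1.1 = vk.2 then p vk.1 q.1.2
        else if q.1.2 = vk.2 then -(p vk.1 q.1.1) else 0
    | Sum.inr m => if m = vk.2 then 1 else 0

lemma mulVec_Phi (d : ℕ) (p : V → Fin d → ℝ) (c : SkewIdx d → ℝ) (v : V) (k : Fin d) :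
    (Phi d p).mulVec c (v, k) =
      (∑ q : {q : Fin d × Fin d // q.1 < q.2},
        (if q.1.1 = k then p v q.1.2 else if q.1.2 = k then -(p v q.1.1) else 0) * c (Sum.inl q))
      + c (Sum.inr k) := by
  rw [Matrix.mulVec, dotProduct, Fintype.sum_sum_type]
  have h2 : ∑ m : Fin d, Phi d p (v, k) (Sum.inr m) * c (Sum.inr m) = c (Sum.inr k) := by
    rw [Finset.sum_eq_single_of_mem k (Finset.mem_univ k)]
    · simp [Phi]
    · intro b _ hb; simp [Phi, hb]
  rw [h2]
  rfl

/-- The key orthogonality: trivial motions are infinitesimal isometries. -/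
lemma orth (d : ℕ) (p : V → Fin d → ℝ) (c : SkewIdx d → ℝ) (a b : V) :
    ∑ k : Fin d, (p a k - p b k) *
      ((Phi d p).mulVec c (a, k) - (Phi d p).mulVec c (b, k)) = 0 := by
  have hdiff : ∀ k, (Phi d p).mulVec c (a, k) - (Phi d p).mulVec c (b, k)
      = ∑ q : {q : Fin d × Fin d // q.1 < q.2},
        (if q.1.1 = k then (p a q.1.2 - p b q.1.2)
          else if q.1.2 = k then -((p a q.1.1) - (p b q.1.1)) else 0) * c (Sum.inl q) := by
    intro k
    rw [mulVec_Phi, mulVec_Phi, add_sub_add_right_eq_sub, ← Finset.sum_sub_distrib]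
    congr 1; funext q
    split_ifs <;> ring
  simp only [hdiff, Finset.mul_sum]
  rw [Finset.sum_comm]
  apply Finset.sum_eq_zero
  intro q _
  have hne : q.1.1 ≠ q.1.2 := ne_of_lt q.2
  have hterm : ∀ k : Fin d, (p a k - p b k) *
      ((if q.1.1 = k then (p a q.1.2 - p b q.1.2)
        else if q.1.2 = k then -((p a q.1.1) - (p b q.1.1)) else 0) * c (Sum.inl q))
      = (if k = q.1.1 then (p a q.1.1 - p b q.1.1) * (p a q.1.2 - p b q.1.2) * c (Sum.inl q)
          else 0)
        + (if k = q.1.2 then -((p a q.1.2 - p b q.1.2) * (p a q.1.1 - p b q.1.1)) * c (Sum.inl q)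
          else 0) := by
    intro k
    split_ifs <;> (try subst_vars) <;> (try ring) <;> (exfalso; clear hdiff; simp_all)
  simp only [hterm, Finset.sum_add_distrib, Finset.sum_ite_eq' Finset.univ,
    Finset.mem_univ, if_true]
  ring

lemma mulVec_rigidity {E : Type*} (d : ℕ) (ep : E → V × V) (p : V → Fin d → ℝ)
    (u : (V × Fin d) → ℝ) (e : E) :
    (rigidityMatrix d ep p).mulVec u e
      = ∑ k : Fin d, (p (ep e).1 k - p (ep e).2 k) * (u ((ep e).1, k) - u ((ep e).2, k)) := by
  rw [Matrix.mulVec, dotProduct, Fintype.sum_prod_type]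
  rcases eq_or_ne (ep e).1 (ep e).2 with hij | hij
  · rw [Finset.sum_eq_zero, Finset.sum_eq_zero]
    · intro k _; rw [hij]; ring
    · intro v _
      apply Finset.sum_eq_zero
      intro k _
      simp only [rigidityMatrix, hij]
      split_ifs <;> ring
  · rw [Finset.sum_eq_add_of_mem (ep e).1 (ep e).2 (Finset.mem_univ _) (Finset.mem_univ _) hij]
    · have h1 : ∑ k : Fin d, rigidityMatrix d ep p e ((ep e).1, k) * u ((ep e).1, k)
          = ∑ k : Fin d, (p (ep e).1 k - p (ep e).2 k) * u ((ep e).1, k) := by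
        apply Finset.sum_congr rfl; intro k _
        simp [rigidityMatrix]
      have h2 : ∑ k : Fin d, rigidityMatrix d ep p e ((ep e).2, k) * u ((ep e).2, k)
          = ∑ k : Fin d, -((p (ep e).1 k - p (ep e).2 k) * u ((ep e).2, k)) := by
        apply Finset.sum_congr rfl; intro k _
        simp only [rigidityMatrix]
        rw [if_neg (by exact fun h => hij h.symm)]
        simp only [if_true]
        ring
      rw [h1, h2, ← Finset.sum_add_distrib]
      apply Finset.sum_congr rfl; intro k _
      ring
    · intro v _ hv
      apply Finset.sum_eq_zero
      intro k _
      simp only [rigidityMatrix]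
      rw [if_neg (by exact fun h => hv.1 h), if_neg (by exact fun h => hv.2 h)]
      ring

/-- Trivial motions on `S`, extended arbitrarily outside `S`. -/
def triv (d : ℕ) (p : V → Fin d → ℝ) (S : Finset V) : Submodule ℝ ((V × Fin d) → ℝ) where
  carrier := {u | ∃ c : SkewIdx d → ℝ, ∀ v ∈ S, ∀ k, u (v, k) = (Phi d p).mulVec c (v, k)}
  add_mem' := by
    rintro u w ⟨c, hc⟩ ⟨c', hc'⟩
    refine ⟨c + c', fun v hv k => ?_⟩
    rw [Matrix.mulVec_add]
    simp [hc v hv k, hc' v hv k]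
  zero_mem' := ⟨0, fun v hv k => by simp [Matrix.mulVec_zero]⟩
  smul_mem' := by
    rintro a u ⟨c, hc⟩
    refine ⟨a • c, fun v hv k => ?_⟩
    rw [Matrix.mulVec_smul]
    simp [hc v hv k]

/-- The placement `p` separates trivial motions on `S`. -/
def PhiInj (d : ℕ) (p : V → Fin d → ℝ) (S : Finset V) : Prop :=
  ∀ c : SkewIdx d → ℝ, (∀ v ∈ S, ∀ k, (Phi d p).mulVec c (v, k) = 0) → c = 0

lemma PhiInj.mono {d : ℕ} {p : V → Fin d → ℝ} {S T : Finset V} (hST : S ⊆ T)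
    (h : PhiInj d p S) : PhiInj d p T :=
  fun c hc => h c (fun v hv k => hc v (hST hv) k)

/-- Trivial motions are in the kernel of the rigidity matrix. -/
lemma triv_le_ker {E : Type*} [Fintype E] (d : ℕ) (ep : E → V × V) (p : V → Fin d → ℝ)
    (S : Finset V) (hep : ∀ e, (ep e).1 ∈ S ∧ (ep e).2 ∈ S) :
    triv d p S ≤ LinearMap.ker (rigidityMatrix d ep p).mulVecLin := by
  rintro u ⟨c, hc⟩
  rw [LinearMap.mem_ker]
  funext e
  rw [Matrix.mulVecLin_apply, mulVec_rigidity]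
  have h1 : ∀ k, u ((ep e).1, k) = (Phi d p).mulVec c ((ep e).1, k) :=
    fun k => hc _ (hep e).1 k
  have h2 : ∀ k, u ((ep e).2, k) = (Phi d p).mulVec c ((ep e).2, k) :=
    fun k => hc _ (hep e).2 k
  simp only [h1, h2, Pi.zero_apply]
  exact orth d p c _ _

/-- Restriction of `Phi` to the rows of `S`. -/
def PhiS (d : ℕ) (p : V → Fin d → ℝ) (S : Finset V) : Matrix (↥S × Fin d) (SkewIdx d) ℝ :=
  fun x c => Phi d p (↑x.1, x.2) c

lemma card_skewIdx (d : ℕ) : Fintype.card (SkewIdx d) = d.choose 2 + d := by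
  rw [Fintype.card_sum, Fintype.card_fin]
  congr 1
  have e : {q : Fin d × Fin d // q.1 < q.2} ≃ Σ j : Fin d, Fin j.val :=
    { toFun := fun q => ⟨q.1.2, ⟨q.1.1.val, q.2⟩⟩
      invFun := fun s => ⟨(⟨s.2.val, lt_trans s.2.isLt s.1.isLt⟩, s.1), s.2.isLt⟩
      left_inv := fun q => by ext <;> rfl
      right_inv := fun s => by rfl }
  rw [Fintype.card_congr e, Fintype.card_sigma]
  have h1 : ∑ j : Fin d, Fintype.card (Fin j.val) = ∑ j ∈ Finset.range d, j := by
    rw [Finset.sum_range fun j => j]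
    apply Finset.sum_congr rfl
    intro j _; simp
  rw [h1]
  have h2 := Finset.sum_range_id_mul_two d
  have h3 : d.choose 2 = d * (d - 1) / 2 := Nat.choose_two_right d
  omega

lemma matrix_rank_add_ker {m n : Type*} [Fintype n] (M : Matrix m n ℝ) :
    M.rank + finrank ℝ (LinearMap.ker M.mulVecLin) = Fintype.card n := by
  have h := LinearMap.finrank_range_add_finrank_ker M.mulVecLin
  rwa [Module.finrank_fintype_fun_eq_card] at h

lemma mulVec_PhiS (d : ℕ) (p : V → Fin d → ℝ) (S : Finset V) (c : SkewIdx d → ℝ)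
    (x : ↥S × Fin d) : (PhiS d p S).mulVec c x = (Phi d p).mulVec c (↑x.1, x.2) := rfl

lemma rank_PhiS_of_inj {d : ℕ} {p : V → Fin d → ℝ} {S : Finset V} (h : PhiInj d p S) :
    Fintype.card (SkewIdx d) ≤ (PhiS d p S).rank := by
  have hker : LinearMap.ker (PhiS d p S).mulVecLin = ⊥ := by
    rw [eq_bot_iff]
    intro c hc
    rw [LinearMap.mem_ker] at hc
    have : c = 0 := h c (fun v hv k => by
      have := congrFun hc (⟨v, hv⟩, k)
      rwa [Matrix.mulVecLin_apply, mulVec_PhiS] at this)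
    simp [this]
  have := matrix_rank_add_ker (PhiS d p S)
  rw [hker] at this
  simp only [finrank_bot] at this
  omega

lemma phiInj_of_rank {d : ℕ} {p : V → Fin d → ℝ} {S : Finset V}
    (h : Fintype.card (SkewIdx d) ≤ (PhiS d p S).rank) : PhiInj d p S := by
  have hle := (PhiS d p S).rank_le_card_width
  have hrn := matrix_rank_add_ker (PhiS d p S)
  have hker0 : finrank ℝ (LinearMap.ker (PhiS d p S).mulVecLin) = 0 := by omega
  rw [Submodule.finrank_eq_zero] at hker0
  intro c hc
  have hmem : c ∈ LinearMap.ker (PhiS d p S).mulVecLin := by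
    rw [LinearMap.mem_ker]
    funext x
    rw [Matrix.mulVecLin_apply, mulVec_PhiS]
    exact hc _ x.1.2 x.2
  rw [hker0] at hmem
  simpa using hmem

lemma finrank_triv_eq {d : ℕ} {p : V → Fin d → ℝ} {S : Finset V} (hinj : PhiInj d p S) :
    finrank ℝ (triv d p S) = (Fintype.card V - S.card) * d + Fintype.card (SkewIdx d) := by
  classical
  -- the two pieces of `triv`
  let Psi1 : (({v : V // v ∉ S} × Fin d) → ℝ) →ₗ[ℝ] ((V × Fin d) → ℝ) :=
    { toFun := fun w x => if h : x.1 ∈ S then 0 else w (⟨x.1, h⟩, x.2)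
      map_add' := fun w w' => by funext x; by_cases h : x.1 ∈ S <;> simp [h]
      map_smul' := fun a w => by funext x; by_cases h : x.1 ∈ S <;> simp [h] }
  let Psi2 : ((SkewIdx d) → ℝ) →ₗ[ℝ] ((V × Fin d) → ℝ) :=
    { toFun := fun c x => if x.1 ∈ S then (Phi d p).mulVec c x else 0
      map_add' := fun c c' => by
        funext x
        by_cases h : x.1 ∈ S <;> simp [h, Matrix.mulVec_add]
      map_smul' := fun a c => by
        funext x
        by_cases h : x.1 ∈ S <;> simp [h, Matrix.mulVec_smul] }
  have htriv : triv d p S = LinearMap.range Psi1 ⊔ LinearMap.range Psi2 := by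
    apply le_antisymm
    · rintro u ⟨c, hc⟩
      have hu : u = Psi1 (fun vc => u (↑vc.1, vc.2)) + Psi2 c := by
        funext x
        by_cases h : x.1 ∈ S
        · simp only [Psi1, Psi2, LinearMap.coe_mk, AddHom.coe_mk, Pi.add_apply, dif_pos h,
            if_pos h, zero_add]
          have := hc x.1 h x.2
          simpa using this
        · simp [Psi1, Psi2, h]
      rw [hu]
      exact Submodule.add_mem_sup (LinearMap.mem_range_self _ _) (LinearMap.mem_range_self _ _)
    · rw [sup_le_iff]
      constructor
      · rintro u ⟨w, rfl⟩
        exact ⟨0, fun v hv k => by simp [Psi1, hv, Matrix.mulVec_zero]⟩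
      · rintro u ⟨c, rfl⟩
        exact ⟨c, fun v hv k => by simp [Psi2, hv]⟩
  have hdisj : LinearMap.range Psi1 ⊓ LinearMap.range Psi2 = ⊥ := by
    rw [eq_bot_iff]
    rintro u ⟨⟨w, hw⟩, ⟨c, hc⟩⟩
    have : u = 0 := by
      funext x
      by_cases h : x.1 ∈ S
      · rw [← hw]; simp [Psi1, h]
      · rw [← hc]; simp [Psi2, h]
    simp [this]
  have hA : finrank ℝ (LinearMap.range Psi1) = (Fintype.card V - S.card) * d := by
    rw [LinearMap.finrank_range_of_inj, Module.finrank_fintype_fun_eq_card,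
      Fintype.card_prod, Fintype.card_fin]
    · congr 1
      rw [Fintype.card_subtype_compl]
      congr 1
      exact Fintype.card_coe S
    · intro w w' hww
      funext vc
      have := congrFun hww (↑vc.1, vc.2)
      simpa [Psi1, vc.1.2] using this
  have hB : finrank ℝ (LinearMap.range Psi2) = Fintype.card (SkewIdx d) := by
    rw [LinearMap.finrank_range_of_inj, Module.finrank_fintype_fun_eq_card]
    have hker : ∀ c, Psi2 c = 0 → c = 0 := by
      intro c hc0
      apply hinj
      intro v hv k
      have := congrFun hc0 (v, k)
      simpa [Psi2, hv] using this
    intro c c' hcc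
    have : Psi2 (c - c') = 0 := by rw [map_sub, hcc, sub_self]
    have h5 := hker _ this
    exact sub_eq_zero.mp h5
  have hsum := Submodule.finrank_sup_add_finrank_inf_eq
    (LinearMap.range Psi1) (LinearMap.range Psi2)
  rw [hdisj, finrank_bot] at hsum
  rw [htriv, ← hA, ← hB]
  omega

lemma exists_phiInj (d : ℕ) (D : Finset V) (hD : D.card = d) :
    ∃ p₀ : V → Fin d → ℝ, PhiInj d p₀ D := by
  classical
  have hcard : Fintype.card ↥D = d := by rw [Fintype.card_coe, hD]
  let eD : ↥D ≃ Fin d := Fintype.equivFinOfCardEq hcard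
  let p₀ : V → Fin d → ℝ := fun v k =>
    if h : v ∈ D then (if (eD ⟨v, h⟩ : ℕ) = (k : ℕ) + 1 then 1 else 0) else 0
  have hval : ∀ (v : ↥D) (k : Fin d),
      p₀ ↑v k = if (eD v : ℕ) = (k : ℕ) + 1 then 1 else 0 := by
    intro v k
    simp only [p₀, dif_pos v.2]
  refine ⟨p₀, ?_⟩
  intro c hc
  have htrans : ∀ k : Fin d, c (Sum.inr k) = 0 := by
    intro k
    have hd0 : 0 < d := k.pos
    set v0 : ↥D := eD.symm ⟨0, hd0⟩ with hv0
    have h0 := hc ↑v0 v0.2 k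
    rw [mulVec_Phi] at h0
    have hp0 : ∀ j, p₀ ↑v0 j = 0 := by
      intro j
      rw [hval]
      have : (eD v0 : ℕ) = 0 := by rw [hv0]; simp
      rw [this]
      simp
    rw [Finset.sum_eq_zero, zero_add] at h0
    · exact h0
    · intro q _
      split_ifs <;> simp [hp0]
  have hskew : ∀ q : {q : Fin d × Fin d // q.1 < q.2}, c (Sum.inl q) = 0 := by
    intro q
    have hq12 : (q.1.1 : ℕ) < (q.1.2 : ℕ) := q.2
    have hlt : (q.1.1 : ℕ) + 1 < d := by have := q.1.2.isLt; omega
    set v1 : ↥D := eD.symm ⟨(q.1.1 : ℕ) + 1, hlt⟩ with hv1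
    have hev1 : (eD v1 : ℕ) = (q.1.1 : ℕ) + 1 := by rw [hv1]; simp
    have hpv : ∀ j : Fin d, p₀ ↑v1 j = if (j : ℕ) = (q.1.1 : ℕ) then 1 else 0 := by
      intro j
      rw [hval, hev1]
      exact if_congr ⟨fun h => by omega, fun h => by omega⟩ rfl rfl
    have h1 := hc ↑v1 v1.2 q.1.2
    rw [mulVec_Phi, htrans, add_zero] at h1
    rw [Finset.sum_eq_single_of_mem q (Finset.mem_univ q)] at h1
    · rw [if_neg (by intro h; rw [h] at hq12; omega), if_pos rfl, hpv] at h1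
      rw [if_pos rfl] at h1
      have : c (Sum.inl q) = 0 := by linarith
      exact this
    · intro q' _ hne
      split_ifs with h1' h2'
      · rw [hpv]
        have hq' : (q'.1.1 : ℕ) < (q'.1.2 : ℕ) := q'.2
        rw [if_neg (by rw [h1'] at hq'; omega)]
        ring
      · rw [hpv]
        rw [if_neg ?_]
        · ring
        · intro hh
          apply hne
          apply Subtype.ext
          have e1 : q'.1.1 = q.1.1 := Fin.ext hh
          have e2 : q'.1.2 = q.1.2 := h2'
          exact Prod.ext e1 e2
      · ring
  funext x
  cases x with
  | inl q => exact hskew q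
  | inr k => exact htrans k

lemma rankBound_arith {m d : ℕ} (h : d ≤ m) :
    rankBound m d + (d.choose 2 + d) = m * d := by
  have h2A : 2 * d.choose 2 = d * (d - 1) := by
    rw [Nat.choose_two_right]
    have hev : Even (d * (d - 1)) := by
      cases d with
      | zero => simp
      | succ n => simpa [mul_comm] using Nat.even_mul_succ_self n
    rcases hev with ⟨t, ht⟩
    omega
  have h2B : 2 * (d + 1).choose 2 = (d + 1) * d := by
    rw [Nat.choose_two_right]
    have hev : Even ((d + 1) * d) := by
      simpa [mul_comm] using Nat.even_mul_succ_self d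
    rcases hev with ⟨t, ht⟩
    simp only [Nat.add_sub_cancel]
    omega
  have hrel : (d + 1) * d = d * (d - 1) + 2 * d := by
    cases d with
    | zero => simp
    | succ n => simp only [Nat.succ_sub_one]; ring
  rw [rankBound]
  by_cases h2 : d + 2 ≤ m
  · rw [if_pos h2]
    have hle : (d + 1) * d ≤ m * d := Nat.mul_le_mul_right d (by omega)
    omega
  · rw [if_neg h2]
    have hm : m = d ∨ m = d + 1 := by omega
    rcases hm with rfl | rfl
    · have hdd : m * (m - 1) + m = m * m := by
        cases m with
        | zero => simp
        | succ n => simp only [Nat.succ_sub_one]; ring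
      omega
    · omega

section Poly
open MvPolynomial

variable (d : ℕ)

/-- The rigidity matrix with polynomial entries. -/
noncomputable def rigidPoly {E : Type*} (ep : E → V × V) :
    Matrix E (V × Fin d) (MvPolynomial (V × Fin d) ℝ) :=
  fun e vk =>
    if vk.1 = (ep e).1 then X ((ep e).1, vk.2) - X ((ep e).2, vk.2)
    else if vk.1 = (ep e).2 then X ((ep e).2, vk.2) - X ((ep e).1, vk.2)
    else 0

lemma rigidPoly_map {E : Type*} (ep : E → V × V) (x : (V × Fin d) → ℝ) :
    (rigidPoly d ep).map (MvPolynomial.eval x) = rigidityMatrix d ep (fun v k => x (v, k)) := by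
  funext e vk
  simp only [rigidPoly, rigidityMatrix, Matrix.map_apply]
  split_ifs <;> simp

/-- The trivial-motion matrix on rows `S` with polynomial entries. -/
noncomputable def phiPoly (S : Finset V) :
    Matrix (↥S × Fin d) (SkewIdx d) (MvPolynomial (V × Fin d) ℝ) :=
  fun vk c =>
    match c with
    | Sum.inl q => if q.1.1 = vk.2 then X ((↑vk.1 : V), q.1.2)
        else if q.1.2 = vk.2 then -X ((↑vk.1 : V), q.1.1) else 0
    | Sum.inr m => if m = vk.2 then 1 else 0

lemma phiPoly_map (S : Finset V) (x : (V × Fin d) → ℝ) :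
    (phiPoly d S).map (MvPolynomial.eval x) = PhiS d (fun v k => x (v, k)) S := by
  funext vk c
  cases c with
  | inl q =>
    simp only [phiPoly, PhiS, Phi, Matrix.map_apply]
    split_ifs <;> simp
  | inr m =>
    simp only [phiPoly, PhiS, Phi, Matrix.map_apply]
    split_ifs <;> simp

end Poly
end Core


/-- A graph with edges `ep : E → V × V` and vertex set `Vs` is generically
rigid in `ℝ^d` if some (equivalently, any generic) placement of its vertices
attains the maximal rigidity-matrix rank `S(|Vs|, d)`. -/
def GenericallyRigidOn {V E : Type*} [Fintype V] [DecidableEq V] [Fintype E]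
    (d : ℕ) (Vs : Finset V) (ep : E → V × V) : Prop :=
  ∃ p : V → Fin d → ℝ, (rigidityMatrix d ep p).rank = rankBound Vs.card d

lemma ker_eq_triv {V E : Type*} [Fintype V] [DecidableEq V] [Fintype E] {d : ℕ}
    (p : V → Fin d → ℝ) (ep : E → V × V) (S : Finset V)
    (hep : ∀ e, (ep e).1 ∈ S ∧ (ep e).2 ∈ S) (hinj : PhiInj d p S) (hdS : d ≤ S.card)
    (hrS : rankBound S.card d ≤ (rigidityMatrix d ep p).rank) :
    LinearMap.ker (rigidityMatrix d ep p).mulVecLin = triv d p S := by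
  refine (Submodule.eq_of_le_of_finrank_le (triv_le_ker d ep p S hep) ?_).symm
  have h1 := matrix_rank_add_ker (rigidityMatrix d ep p)
  have hcardVd : Fintype.card (V × Fin d) = Fintype.card V * d := by
    simp [Fintype.card_prod]
  rw [hcardVd] at h1
  have h2 := finrank_triv_eq hinj
  have h3 := rankBound_arith (m := S.card) (d := d) hdS
  have h4 : S.card * d ≤ Fintype.card V * d :=
    Nat.mul_le_mul_right d (Finset.card_le_univ S)
  have h5 : (Fintype.card V - S.card) * d = Fintype.card V * d - S.card * d :=
    Nat.sub_mul _ _ _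
  have h6 := card_skewIdx d
  omega

/-- Gluing lemma: if `G₁` and `G₂` are generically rigid in `ℝ^d` and share at
least `d` vertices, then `G₁ ∪ G₂` is generically rigid in `ℝ^d`. -/
theorem genericallyRigid_union {V E₁ E₂ : Type*}
    [Fintype V] [DecidableEq V] [Fintype E₁] [Fintype E₂]
    (d : ℕ) (V₁ V₂ : Finset V)
    (ep₁ : E₁ → V × V) (hep₁ : ∀ e, (ep₁ e).1 ∈ V₁ ∧ (ep₁ e).2 ∈ V₁)
    (ep₂ : E₂ → V × V) (hep₂ : ∀ e, (ep₂ e).1 ∈ V₂ ∧ (ep₂ e).2 ∈ V₂)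
    (hshare : d ≤ (V₁ ∩ V₂).card)
    (h₁ : GenericallyRigidOn d V₁ ep₁) (h₂ : GenericallyRigidOn d V₂ ep₂) :
    GenericallyRigidOn d (V₁ ∪ V₂) (Sum.elim ep₁ ep₂) := by
  classical
  obtain ⟨q₁, hq₁⟩ := h₁
  obtain ⟨q₂, hq₂⟩ := h₂
  obtain ⟨D, hDsub, hDcard⟩ := Finset.exists_subset_card_eq hshare
  have hDV₁ : D ⊆ V₁ := hDsub.trans Finset.inter_subset_left
  have hDV₂ : D ⊆ V₂ := hDsub.trans Finset.inter_subset_right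
  have hDU : D ⊆ V₁ ∪ V₂ := hDV₁.trans Finset.subset_union_left
  have hdn₁ : d ≤ V₁.card := hDcard ▸ Finset.card_le_card hDV₁
  have hdn₂ : d ≤ V₂.card := hDcard ▸ Finset.card_le_card hDV₂
  have hdnU : d ≤ (V₁ ∪ V₂).card := hDcard ▸ Finset.card_le_card hDU
  obtain ⟨p₀, hp₀⟩ := exists_phiInj d D hDcard
  -- genericity polynomials
  obtain ⟨g₁, hg₁0, hg₁⟩ := rank_ge_of_poly (rigidPoly d ep₁) (rankBound V₁.card d)
    (fun vk => q₁ vk.1 vk.2) (by rw [rigidPoly_map]; exact hq₁.ge)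
  obtain ⟨g₂, hg₂0, hg₂⟩ := rank_ge_of_poly (rigidPoly d ep₂) (rankBound V₂.card d)
    (fun vk => q₂ vk.1 vk.2) (by rw [rigidPoly_map]; exact hq₂.ge)
  obtain ⟨g₃, hg₃0, hg₃⟩ := rank_ge_of_poly (phiPoly d D) (Fintype.card (SkewIdx d))
    (fun vk => p₀ vk.1 vk.2) (by rw [phiPoly_map]; exact rank_PhiS_of_inj hp₀)
  obtain ⟨x, hx⟩ := exists_eval_ne_zero (g₁ * g₂ * g₃)
    (mul_ne_zero (mul_ne_zero hg₁0 hg₂0) hg₃0)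
  rw [_root_.map_mul, _root_.map_mul] at hx
  have hx₁ : MvPolynomial.eval x g₁ ≠ 0 := fun h => hx (by rw [h]; ring)
  have hx₂ : MvPolynomial.eval x g₂ ≠ 0 := fun h => hx (by rw [h]; ring)
  have hx₃ : MvPolynomial.eval x g₃ ≠ 0 := fun h => hx (by rw [h]; ring)
  set p : V → Fin d → ℝ := fun v k => x (v, k) with hp
  have hr₁ : rankBound V₁.card d ≤ (rigidityMatrix d ep₁ p).rank := by
    have := hg₁ x hx₁; rwa [rigidPoly_map] at this
  have hr₂ : rankBound V₂.card d ≤ (rigidityMatrix d ep₂ p).rank := by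
    have := hg₂ x hx₂; rwa [rigidPoly_map] at this
  have hinjD : PhiInj d p D := phiInj_of_rank (by
    have := hg₃ x hx₃; rwa [phiPoly_map] at this)
  have hinj₁ : PhiInj d p V₁ := hinjD.mono hDV₁
  have hinj₂ : PhiInj d p V₂ := hinjD.mono hDV₂
  have hinjU : PhiInj d p (V₁ ∪ V₂) := hinjD.mono hDU
  have hcardVd : Fintype.card (V × Fin d) = Fintype.card V * d := by
    simp [Fintype.card_prod]
  have hmulV : ∀ s : Finset V, s.card ≤ Fintype.card V →
      s.card * d ≤ Fintype.card V * d := fun s hs => Nat.mul_le_mul_right d hs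
  have hsubmul : ∀ s : Finset V, (Fintype.card V - s.card) * d
      = Fintype.card V * d - s.card * d := fun s => Nat.sub_mul _ _ _
  -- kernels of the two pieces
  have hK₁ := ker_eq_triv p ep₁ V₁ hep₁ hinj₁ hdn₁ hr₁
  have hK₂ := ker_eq_triv p ep₂ V₂ hep₂ hinj₂ hdn₂ hr₂
  -- the union
  refine ⟨p, ?_⟩
  have hepu : ∀ e : E₁ ⊕ E₂, ((Sum.elim ep₁ ep₂) e).1 ∈ V₁ ∪ V₂ ∧
      ((Sum.elim ep₁ ep₂) e).2 ∈ V₁ ∪ V₂ := by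
    intro e
    cases e with
    | inl e => exact ⟨Finset.mem_union_left _ (hep₁ e).1, Finset.mem_union_left _ (hep₁ e).2⟩
    | inr e => exact ⟨Finset.mem_union_right _ (hep₂ e).1, Finset.mem_union_right _ (hep₂ e).2⟩
  have hKu : LinearMap.ker (rigidityMatrix d (Sum.elim ep₁ ep₂) p).mulVecLin
      = triv d p (V₁ ∪ V₂) := by
    apply le_antisymm
    · intro u hu
      rw [LinearMap.mem_ker] at hu
      have hu₁ : u ∈ LinearMap.ker (rigidityMatrix d ep₁ p).mulVecLin := by
        rw [LinearMap.mem_ker]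
        funext e
        exact congrFun hu (Sum.inl e)
      have hu₂ : u ∈ LinearMap.ker (rigidityMatrix d ep₂ p).mulVecLin := by
        rw [LinearMap.mem_ker]
        funext e
        exact congrFun hu (Sum.inr e)
      rw [hK₁] at hu₁
      rw [hK₂] at hu₂
      obtain ⟨c₁, hc₁⟩ := hu₁
      obtain ⟨c₂, hc₂⟩ := hu₂
      have hceq : c₁ = c₂ := by
        have h0 : ∀ v ∈ D, ∀ k, (Phi d p).mulVec (c₁ - c₂) (v, k) = 0 := by
          intro v hv k
          rw [Matrix.mulVec_sub, Pi.sub_apply, ← hc₁ v (hDV₁ hv) k, ← hc₂ v (hDV₂ hv) k]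
          ring
        exact sub_eq_zero.mp (hinjD (c₁ - c₂) h0)
      refine ⟨c₁, fun v hv k => ?_⟩
      rcases Finset.mem_union.mp hv with h | h
      · exact hc₁ v h k
      · rw [hceq]; exact hc₂ v h k
    · exact triv_le_ker d (Sum.elim ep₁ ep₂) p (V₁ ∪ V₂) hepu
  have h1 := matrix_rank_add_ker (rigidityMatrix d (Sum.elim ep₁ ep₂) p)
  rw [hcardVd, hKu] at h1
  have h2 := finrank_triv_eq hinjU
  have h3 := rankBound_arith (m := (V₁ ∪ V₂).card) (d := d) hdnU
  have h4 := hmulV (V₁ ∪ V₂) (Finset.card_le_univ _)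
  have h5 := hsubmul (V₁ ∪ V₂)
  have h6 := card_skewIdx d
  omega
end
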